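/- Let Z be a stability function on an abelian category 𝒜, and let A, B be nonzero Z-semistable objects of 𝒜 with μ(A) > μ(B) (equivalently D(A)·R(B) > D(B)·R(A)). Then Hom(A, B) = 0. -/
import Mathlib


open CategoryTheory CategoryTheory.Limits

namespace BridgelandNotes

variable {𝒜 : Type*} [Category 𝒜] [Abelian 𝒜]

/-- `Z` is additive on short exact sequences:
`Z(E) = Z(F) + Z(G)` whenever `0 → F → E → G → 0` is exact in `𝒜`. -/
def AdditiveOnSES (Z : 𝒜 → ℂ) : Prop :=
  ∀ S : ShortComplex 𝒜, S.ShortExact → Z S.X₂ = Z S.X₁ + Z S.X₃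

/-- `Z` is a stability function on the abelian category `𝒜`: it is additive on short
exact sequences, every nonzero object satisfies `Im Z(E) ≥ 0`, and `Im Z(E) = 0`
implies `Re Z(E) < 0`. -/
def IsStabilityFunction (Z : 𝒜 → ℂ) : Prop :=
  AdditiveOnSES Z ∧
    ∀ E : 𝒜, ¬ IsZero E → 0 ≤ (Z E).im ∧ ((Z E).im = 0 → (Z E).re < 0)

/-- The generalized rank `R(E) := Im Z(E)`. -/
def genR (Z : 𝒜 → ℂ) (E : 𝒜) : ℝ := (Z E).im

/-- The generalized degree `D(E) := -Re Z(E)`. -/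
def genD (Z : 𝒜 → ℂ) (E : 𝒜) : ℝ := -(Z E).re

/-- The slope inequality `μ(A) ≤ μ(B)`, encoded for nonzero objects by
cross-multiplication: `D(A)·R(B) ≤ D(B)·R(A)`. -/
def SlopeLE (Z : 𝒜 → ℂ) (A B : 𝒜) : Prop :=
  genD Z A * genR Z B ≤ genD Z B * genR Z A

/-- The strict slope inequality `μ(A) < μ(B)`, encoded for nonzero objects by
cross-multiplication: `D(A)·R(B) < D(B)·R(A)`. -/
def SlopeLT (Z : 𝒜 → ℂ) (A B : 𝒜) : Prop :=
  genD Z A * genR Z B < genD Z B * genR Z A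

/-- A nonzero object `E` is `Z`-semistable if `μ(F) ≤ μ(E)` for every nonzero proper
subobject `F` of `E`. -/
def IsSemistable (Z : 𝒜 → ℂ) (E : 𝒜) : Prop :=
  ¬ IsZero E ∧
    ∀ (F : 𝒜) (f : F ⟶ E), Mono f → ¬ IsZero F → ¬ IsIso f → SlopeLE Z F E

/-- The abelian category `𝒜` is noetherian: every ascending chain of subobjects of
any object stabilizes. -/
def NoetherianCategory (𝒜 : Type*) [Category 𝒜] [Abelian 𝒜] : Prop :=
  ∀ (E : 𝒜) (f : ℕ →o Subobject E), ∃ N : ℕ, ∀ n : ℕ, N ≤ n → f n = f N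

/-- The image of the generalized rank `R = Im ∘ Z` is a discrete subset of `ℝ`. -/
def HasDiscreteRank (Z : 𝒜 → ℂ) : Prop :=
  ∀ x ∈ Set.range (genR Z), ∃ ε > (0 : ℝ), ∀ y ∈ Set.range (genR Z), |y - x| < ε → y = x

/-- The subquotient `T/S` of two nested subobjects `S ≤ T` of an object of `𝒜`. -/
noncomputable def subquot {E : 𝒜} (S T : Subobject E) (h : S ≤ T) : 𝒜 :=
  cokernel (Subobject.ofLE S T h)

lemma Z_of_isZero (Z : 𝒜 → ℂ) (hZ : AdditiveOnSES Z) {O : 𝒜} (hO : IsZero O) : Z O = 0 := by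
  have h : (ShortComplex.mk (0 : O ⟶ O) (𝟙 O) (by simp)).ShortExact := by
    apply ShortComplex.ShortExact.mk'
    · rw [ShortComplex.exact_iff_mono _ rfl]; dsimp; infer_instance
    · exact mono_of_source_iso_zero _ hO.isoZero
    · dsimp; infer_instance
  have h2 := hZ _ h
  dsimp at h2
  linear_combination -h2

open ZeroObject in
lemma Z_of_iso (Z : 𝒜 → ℂ) (hZ : AdditiveOnSES Z) {X Y : 𝒜} (e : X ≅ Y) : Z X = Z Y := by
  have h : (ShortComplex.mk e.hom (0 : Y ⟶ (0 : 𝒜)) (by simp)).ShortExact := by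
    apply ShortComplex.ShortExact.mk'
    · rw [ShortComplex.exact_iff_epi _ rfl]; dsimp; infer_instance
    · dsimp; infer_instance
    · exact epi_of_target_iso_zero _ (Iso.refl _)
  have h2 := hZ _ h
  dsimp at h2
  rw [Z_of_isZero Z hZ (isZero_zero 𝒜)] at h2
  linear_combination -h2

lemma Z_ses (Z : 𝒜 → ℂ) (hZ : AdditiveOnSES Z) {A B : 𝒜} (f : A ⟶ B) :
    Z A = Z (kernel f) + Z (image f) := by
  have hzero : kernel.ι f ≫ factorThruImage f = 0 := by
    rw [← cancel_mono (image.ι f)]; simp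
  have h : (ShortComplex.mk (kernel.ι f) (factorThruImage f) hzero).ShortExact := by
    apply ShortComplex.ShortExact.mk'
    · let φ : ShortComplex.mk (kernel.ι f) (factorThruImage f) hzero ⟶
          ShortComplex.mk (kernel.ι f) f (by simp) :=
        { τ₁ := 𝟙 _, τ₂ := 𝟙 _, τ₃ := image.ι f, comm₂₃ := by simp }
      haveI : Epi φ.τ₁ := by dsimp [φ]; infer_instance
      haveI : IsIso φ.τ₂ := by dsimp [φ]; infer_instance
      haveI : Mono φ.τ₃ := by dsimp [φ]; infer_instance
      exact (ShortComplex.exact_iff_of_epi_of_isIso_of_mono φ).mpr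
        (ShortComplex.exact_kernel f)
    · dsimp; infer_instance
    · dsimp; infer_instance
  exact hZ _ h

/-- If `A`, `B` are nonzero `Z`-semistable objects with `μ(A) > μ(B)`
(i.e. `D(B)·R(A) < D(A)·R(B)`), then `Hom(A, B) = 0`. -/
theorem hom_eq_zero_of_slope_lt (Z : 𝒜 → ℂ) (hZ : IsStabilityFunction Z) (A B : 𝒜)
    (hA : IsSemistable Z A) (hB : IsSemistable Z B)
    (hslope : SlopeLT Z B A) (f : A ⟶ B) : f = 0 := by
  by_contra hf
  obtain ⟨hadd, hpos⟩ := hZ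
  have hIz : ¬ IsZero (image f) := by
    intro h
    exact hf (by rw [← image.fac f, h.eq_of_src (image.ι f) 0, comp_zero])
  have hIB : SlopeLE Z (image f) B := by
    by_cases hiso : IsIso (image.ι f)
    · have e := Z_of_iso Z hadd (asIso (image.ι f))
      unfold SlopeLE genD genR
      rw [e]
    · exact hB.2 _ (image.ι f) inferInstance hIz hiso
  have hK : genD Z (kernel f) * genR Z A ≤ genD Z A * genR Z (kernel f) := by
    by_cases hKz : IsZero (kernel f)
    · have hz := Z_of_isZero Z hadd hKz
      simp [genD, genR, hz]
    · by_cases hiso : IsIso (kernel.ι f)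
      · exact absurd (by rw [← cancel_epi (kernel.ι f), kernel.condition, comp_zero]) hf
      · exact hA.2 _ (kernel.ι f) inferInstance hKz hiso
  have hsum := Z_ses Z hadd f
  have hD : genD Z A = genD Z (kernel f) + genD Z (image f) := by
    simp [genD, hsum]; ring
  have hR : genR Z A = genR Z (kernel f) + genR Z (image f) := by
    simp [genR, hsum]
  set dK := genD Z (kernel f) with hdK
  set rK := genR Z (kernel f) with hrK
  set dA := genD Z A with hdA
  set dB := genD Z B
  set dI := genD Z (image f)
  set rA := genR Z A
  set rB := genR Z B
  set rI := genR Z (image f)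
  have hIB' : dI * rB ≤ dB * rI := hIB
  have e1 : dK = dA - dI := by linarith
  have e2 : rK = rA - rI := by linarith
  rw [e1, e2] at hK
  have hAI : dA * rI ≤ dI * rA := by nlinarith [hK]
  have hrA : 0 ≤ rA := (hpos A hA.1).1
  have hrB : 0 ≤ rB := (hpos B hB.1).1
  have hrI : 0 ≤ rI := (hpos _ hIz).1
  have hslope' : dB * rA < dA * rB := hslope
  rcases eq_or_lt_of_le hrI with h0 | h0
  · -- rI = 0, so dI > 0
    have hdI : 0 < dI := by
      have := (hpos _ hIz).2 (by exact h0.symm)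
      simp only [genD, dI]
      linarith
    have hrB0 : rB ≤ 0 := by
      have hz : dB * rI = 0 := by rw [← h0, mul_zero]
      nlinarith [hIB', hdI, hz]
    have hrB0' : rB = 0 := le_antisymm hrB0 hrB
    have hdB : 0 < dB := by
      have := (hpos B hB.1).2 hrB0'
      simp only [genD, dB]
      linarith
    have hz : dA * rB = 0 := by rw [hrB0', mul_zero]
    nlinarith [hslope', hz, mul_nonneg hdB.le hrA]
  · nlinarith [mul_le_mul_of_nonneg_right hAI hrB, mul_le_mul_of_nonneg_right hIB hrA,
      mul_lt_mul_of_pos_left hslope' h0]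

end BridgelandNotes
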